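/- arXiv:1112.1633 — 5 statements merged into one kernel-verified Lean document; each statement's English description precedes it below -/
import Mathlib

section
/- For every k ≥ 0 and every x ∈ [a,b], the formal power X̃⁽²ᵏ⁾ satisfies the bound |X̃⁽²ᵏ⁾(x)| ≤ (max_{[a,b]} |r u0²|)ᵏ · (max_{[a,b]} |1/(p u0²)|)ᵏ · (b−a)²ᵏ / (2k)!. Consequently the series Σ_{k=0}^∞ λᵏ X̃⁽²ᵏ⁾ is majorized by the convergent numerical series Σ_{k=0}^∞ cᵏ/(2k)! with c = |λ| (max_{[a,b]} |r u0²|)(max_{[a,b]} |1/(p u0²)|)(b−a)². -/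
open Set MeasureTheory Filter Finset
open scoped Topology Interval
open intervalIntegral

/-- Formal powers defined by recursive integration: at step `n+1` the integrand is
multiplied by `wOdd` if `n+1` is odd and by `wEven` if `n+1` is even. -/
noncomputable def formalPower (wOdd wEven : ℝ → ℂ) (x0 : ℝ) : ℕ → ℝ → ℂ
  | 0 => fun _ => 1
  | n + 1 => fun x => ∫ s in x0..x,
      formalPower wOdd wEven x0 n s * (if (n + 1) % 2 = 1 then wOdd s else wEven s)

/-- The formal powers `X̃⁽ⁿ⁾` associated with the Sturm-Liouville equation
`(p u')' + q u = λ r u` and a particular solution `u0`. -/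
noncomputable def XtSL (p r u0 : ℝ → ℂ) (x0 : ℝ) : ℕ → ℝ → ℂ :=
  formalPower (fun s => u0 s ^ 2 * r s) (fun s => 1 / (u0 s ^ 2 * p s)) x0

/-- The formal powers `X⁽ⁿ⁾`. -/
noncomputable def XSL (p r u0 : ℝ → ℂ) (x0 : ℝ) : ℕ → ℝ → ℂ :=
  formalPower (fun s => 1 / (u0 s ^ 2 * p s)) (fun s => u0 s ^ 2 * r s) x0

/-- `u` solves `(p u')' + q u = g` on `(a,b)`, with the implied differentiability. -/
def SolvesSL (p q : ℝ → ℂ) (a b : ℝ) (u g : ℝ → ℂ) : Prop :=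
  (∀ x ∈ Set.Ioo a b, DifferentiableAt ℝ u x) ∧
  (∀ x ∈ Set.Ioo a b, DifferentiableAt ℝ (fun y => p y * deriv u y) x) ∧
  ∀ x ∈ Set.Ioo a b, deriv (fun y => p y * deriv u y) x + q x * u x = g x

lemma integral_abs_pow (x0 x : ℝ) (n : ℕ) :
    |∫ s in x0..x, |s - x0| ^ n| = |x - x0| ^ (n + 1) / (n + 1) := by
  rcases le_total x0 x with h | h
  · have he : Set.EqOn (fun s => |s - x0| ^ n) (fun s => (s - x0) ^ n) (Set.uIcc x0 x) := by
      intro s hs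
      rw [Set.uIcc_of_le h] at hs
      simp only []
      rw [abs_of_nonneg (by linarith [hs.1])]
    rw [intervalIntegral.integral_congr he,
      intervalIntegral.integral_comp_sub_right (fun t => t ^ n) x0, sub_self,
      integral_pow, abs_of_nonneg (show (0:ℝ) ≤ x - x0 by linarith),
      zero_pow (Nat.succ_ne_zero n), sub_zero,
      abs_of_nonneg (div_nonneg (pow_nonneg (by linarith) _) (by positivity))]
  · have he : Set.EqOn (fun s => |s - x0| ^ n) (fun s => (x0 - s) ^ n) (Set.uIcc x0 x) := by
      intro s hs
      rw [Set.uIcc_of_ge h] at hs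
      simp only []
      rw [abs_sub_comm, abs_of_nonneg (by linarith [hs.2])]
    rw [intervalIntegral.integral_congr he,
      intervalIntegral.integral_comp_sub_left (fun t => t ^ n) x0, sub_self,
      integral_pow, abs_sub_comm x x0,
      abs_of_nonneg (show (0:ℝ) ≤ x0 - x by linarith),
      zero_pow (Nat.succ_ne_zero n), zero_sub, abs_div, abs_neg,
      abs_of_nonneg (pow_nonneg (by linarith) _ : (0:ℝ) ≤ (x0 - x) ^ (n+1)),
      abs_of_nonneg (by positivity : (0:ℝ) ≤ (n:ℝ) + 1)]

lemma step_bound {a b x0 x : ℝ} (hx0 : x0 ∈ Set.Icc a b) (hx : x ∈ Set.Icc a b)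
    (f : ℝ → ℂ) (C : ℝ) (hC : 0 ≤ C) (n : ℕ)
    (hf : ContinuousOn f (Set.Icc a b))
    (hb : ∀ s ∈ Set.Icc a b, ‖f s‖ ≤ C * |s - x0| ^ n) :
    ‖∫ s in x0..x, f s‖ ≤ C * (|x - x0| ^ (n + 1) / (n + 1)) := by
  have hsub : Set.uIcc x0 x ⊆ Set.Icc a b := Set.uIcc_subset_Icc hx0 hx
  have hgint : IntervalIntegrable (fun s => C * |s - x0| ^ n) volume x0 x := by
    apply Continuous.intervalIntegrable
    exact continuous_const.mul ((continuous_abs.comp (continuous_id.sub continuous_const)).pow n)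
  have hae : ∀ᵐ t ∂(volume.restrict (Ι x0 x)), ‖f t‖ ≤ C * |t - x0| ^ n := by
    refine ae_restrict_of_forall_mem measurableSet_uIoc fun t ht => ?_
    exact hb t (hsub (Set.uIoc_subset_uIcc ht))
  have key := intervalIntegral.norm_integral_le_abs_of_norm_le hae hgint
  calc ‖∫ s in x0..x, f s‖ ≤ |∫ s in x0..x, C * |s - x0| ^ n| := key
    _ = C * (|x - x0| ^ (n + 1) / (n + 1)) := by
        rw [intervalIntegral.integral_const_mul, abs_mul, abs_of_nonneg hC,
          integral_abs_pow]

lemma formalPower_bound {a b x0 : ℝ} (hab : a ≤ b) (hx0 : x0 ∈ Set.Icc a b)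
    (wOdd wEven : ℝ → ℂ)
    (hcO : ContinuousOn wOdd (Set.Icc a b)) (hcE : ContinuousOn wEven (Set.Icc a b))
    (M1 M2 : ℝ) (hM1n : 0 ≤ M1) (hM2n : 0 ≤ M2)
    (hM1 : ∀ s ∈ Set.Icc a b, ‖wOdd s‖ ≤ M1) (hM2 : ∀ s ∈ Set.Icc a b, ‖wEven s‖ ≤ M2) :
    ∀ n : ℕ, ContinuousOn (formalPower wOdd wEven x0 n) (Set.Icc a b) ∧
      ∀ x ∈ Set.Icc a b, ‖formalPower wOdd wEven x0 n x‖ ≤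
        M1 ^ ((n + 1) / 2) * M2 ^ (n / 2) * |x - x0| ^ n / (Nat.factorial n) := by
  intro n
  induction n with
  | zero =>
    constructor
    · exact continuousOn_const
    · intro x _
      simp [formalPower]
  | succ n ih =>
    obtain ⟨hcont, hbd⟩ := ih
    set w : ℝ → ℂ := fun s => if (n + 1) % 2 = 1 then wOdd s else wEven s with hw
    set Mw : ℝ := if (n + 1) % 2 = 1 then M1 else M2 with hMw
    have hwcont : ContinuousOn w (Set.Icc a b) := by
      by_cases h : (n + 1) % 2 = 1 <;> simp only [hw, h, if_true, if_false] <;>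
        [exact hcO; skip] <;> simpa [h] using hcE
    have hwbd : ∀ s ∈ Set.Icc a b, ‖w s‖ ≤ Mw := by
      intro s hs
      by_cases h : (n + 1) % 2 = 1 <;> simp only [hw, hMw, h, if_true, if_false]
      · exact hM1 s hs
      · exact hM2 s hs
    have hMwn : 0 ≤ Mw := by
      by_cases h : (n + 1) % 2 = 1 <;> simp only [hMw, h, if_true, if_false] <;> assumption
    have hBn : 0 ≤ M1 ^ ((n + 1) / 2) * M2 ^ (n / 2) :=
      mul_nonneg (pow_nonneg hM1n _) (pow_nonneg hM2n _)
    set f : ℝ → ℂ := fun s => formalPower wOdd wEven x0 n s * w s with hf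
    have hfc : ContinuousOn f (Set.Icc a b) := hcont.mul hwcont
    set C : ℝ := Mw * (M1 ^ ((n + 1) / 2) * M2 ^ (n / 2)) / (Nat.factorial n) with hCdef
    have hC : 0 ≤ C := div_nonneg (mul_nonneg hMwn hBn) (Nat.cast_nonneg _)
    have hfb : ∀ s ∈ Set.Icc a b, ‖f s‖ ≤ C * |s - x0| ^ n := by
      intro s hs
      rw [hf]
      simp only [norm_mul]
      calc ‖formalPower wOdd wEven x0 n s‖ * ‖w s‖
          ≤ (M1 ^ ((n + 1) / 2) * M2 ^ (n / 2) * |s - x0| ^ n / (Nat.factorial n)) * Mw := by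
            apply mul_le_mul (hbd s hs) (hwbd s hs) (norm_nonneg _)
            exact div_nonneg (mul_nonneg hBn (pow_nonneg (abs_nonneg _) _)) (Nat.cast_nonneg _)
        _ = C * |s - x0| ^ n := by rw [hCdef]; ring
    have hdef : formalPower wOdd wEven x0 (n + 1) = fun x => ∫ s in x0..x, f s := rfl
    have hBstep : Mw * (M1 ^ ((n + 1) / 2) * M2 ^ (n / 2)) =
        M1 ^ ((n + 1 + 1) / 2) * M2 ^ ((n + 1) / 2) := by
      rcases Nat.even_or_odd n with ⟨m, hm⟩ | ⟨m, hm⟩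
      · have h1 : (n + 1) % 2 = 1 := by omega
        have e1 : (n + 1) / 2 = m := by omega
        have e2 : n / 2 = m := by omega
        have e3 : (n + 1 + 1) / 2 = m + 1 := by omega
        rw [hMw, if_pos h1, e1, e2, e3]
        ring
      · have h1 : ¬ (n + 1) % 2 = 1 := by omega
        have e1 : (n + 1) / 2 = m + 1 := by omega
        have e2 : n / 2 = m := by omega
        have e3 : (n + 1 + 1) / 2 = m + 1 := by omega
        rw [hMw, if_neg h1, e1, e2, e3]
        ring
    constructor
    · rw [hdef]
      have hint : IntervalIntegrable f volume a b := by
        apply ContinuousOn.intervalIntegrable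
        rwa [Set.uIcc_of_le hab]
      have := intervalIntegral.continuousOn_primitive_interval' hint
        (by rwa [Set.uIcc_of_le hab])
      rwa [Set.uIcc_of_le hab] at this
    · intro x hx
      rw [hdef]
      calc ‖∫ s in x0..x, f s‖ ≤ C * (|x - x0| ^ (n + 1) / (n + 1)) :=
            step_bound hx0 hx f C hC n hfc hfb
        _ = M1 ^ ((n + 1 + 1) / 2) * M2 ^ ((n + 1) / 2) * |x - x0| ^ (n + 1) /
              (Nat.factorial (n + 1)) := by
            rw [hCdef, ← hBstep, Nat.factorial_succ, Nat.cast_mul, Nat.cast_add,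
              Nat.cast_one, div_mul_div_comm, mul_comm (Nat.factorial n : ℝ) ((n : ℝ) + 1)]

theorem spps_Xt_estimate
    (a b x0 : ℝ) (hab : a < b) (p q r u0 : ℝ → ℂ) (lam : ℂ)
    (hu0ne : ∀ x ∈ Set.Icc a b, u0 x ≠ 0)
    (hu0sol : SolvesSL p q a b u0 (fun _ => 0))
    (hc1 : ContinuousOn (fun x => u0 x ^ 2 * r x) (Set.Icc a b))
    (hc2 : ContinuousOn (fun x => 1 / (u0 x ^ 2 * p x)) (Set.Icc a b))
    (hx0 : x0 ∈ Set.Icc a b) (hpc : ContinuousAt p x0) (hp0 : p x0 ≠ 0) :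
    (∀ k : ℕ, ∀ x ∈ Set.Icc a b,
      ‖XtSL p r u0 x0 (2 * k) x‖ ≤
        (sSup ((fun x => ‖u0 x ^ 2 * r x‖) '' Set.Icc a b)) ^ k *
        (sSup ((fun x => ‖1 / (u0 x ^ 2 * p x)‖) '' Set.Icc a b)) ^ k *
        (b - a) ^ (2 * k) / (Nat.factorial (2 * k)) ) ∧
    (∀ k : ℕ, ∀ x ∈ Set.Icc a b,
      ‖lam ^ k * XtSL p r u0 x0 (2 * k) x‖ ≤
        (‖lam‖ *
          (sSup ((fun x => ‖u0 x ^ 2 * r x‖) '' Set.Icc a b)) *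
          (sSup ((fun x => ‖1 / (u0 x ^ 2 * p x)‖) '' Set.Icc a b)) *
          (b - a) ^ 2) ^ k / (Nat.factorial (2 * k)) ) ∧
    Summable (fun k : ℕ =>
      (‖lam‖ *
        (sSup ((fun x => ‖u0 x ^ 2 * r x‖) '' Set.Icc a b)) *
        (sSup ((fun x => ‖1 / (u0 x ^ 2 * p x)‖) '' Set.Icc a b)) *
        (b - a) ^ 2) ^ k / (Nat.factorial (2 * k))) := by
  have hab' : a ≤ b := hab.le
  set M1 : ℝ := sSup ((fun x => ‖u0 x ^ 2 * r x‖) '' Set.Icc a b) with hM1def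
  set M2 : ℝ := sSup ((fun x => ‖1 / (u0 x ^ 2 * p x)‖) '' Set.Icc a b) with hM2def
  have habs1 : ContinuousOn (fun x => ‖u0 x ^ 2 * r x‖) (Set.Icc a b) :=
    hc1.norm
  have habs2 : ContinuousOn (fun x => ‖1 / (u0 x ^ 2 * p x)‖) (Set.Icc a b) :=
    hc2.norm
  have hbdd1 : BddAbove ((fun x => ‖u0 x ^ 2 * r x‖) '' Set.Icc a b) :=
    (isCompact_Icc.image_of_continuousOn habs1).bddAbove
  have hbdd2 : BddAbove ((fun x => ‖1 / (u0 x ^ 2 * p x)‖) '' Set.Icc a b) :=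
    (isCompact_Icc.image_of_continuousOn habs2).bddAbove
  have hM1 : ∀ s ∈ Set.Icc a b, ‖u0 s ^ 2 * r s‖ ≤ M1 := fun s hs =>
    le_csSup hbdd1 ⟨s, hs, rfl⟩
  have hM2 : ∀ s ∈ Set.Icc a b, ‖1 / (u0 s ^ 2 * p s)‖ ≤ M2 := fun s hs =>
    le_csSup hbdd2 ⟨s, hs, rfl⟩
  have hmema : a ∈ Set.Icc a b := ⟨le_rfl, hab'⟩
  have hM1n : 0 ≤ M1 := le_trans (norm_nonneg _) (hM1 a hmema)
  have hM2n : 0 ≤ M2 := le_trans (norm_nonneg _) (hM2 a hmema)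
  have key := formalPower_bound hab' hx0 _ _ hc1 hc2 M1 M2 hM1n hM2n hM1 hM2
  have hba : 0 ≤ b - a := by linarith
  have part1 : ∀ k : ℕ, ∀ x ∈ Set.Icc a b,
      ‖XtSL p r u0 x0 (2 * k) x‖ ≤
        M1 ^ k * M2 ^ k * (b - a) ^ (2 * k) / (Nat.factorial (2 * k)) := by
    intro k x hx
    have hb := (key (2 * k)).2 x hx
    have e1 : (2 * k + 1) / 2 = k := by omega
    have e2 : (2 * k) / 2 = k := by omega
    rw [e1, e2] at hb
    have hxx : |x - x0| ≤ b - a := by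
      rw [abs_le]
      exact ⟨by linarith [hx.1, hx0.2], by linarith [hx.2, hx0.1]⟩
    have hpow : |x - x0| ^ (2 * k) ≤ (b - a) ^ (2 * k) :=
      pow_le_pow_left₀ (abs_nonneg _) hxx _
    calc ‖XtSL p r u0 x0 (2 * k) x‖
        ≤ M1 ^ k * M2 ^ k * |x - x0| ^ (2 * k) / (Nat.factorial (2 * k)) := hb
      _ ≤ M1 ^ k * M2 ^ k * (b - a) ^ (2 * k) / (Nat.factorial (2 * k)) := by
          exact (div_le_div_iff_of_pos_right (by exact_mod_cast Nat.factorial_pos _)).2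
            (mul_le_mul_of_nonneg_left hpow (mul_nonneg (pow_nonneg hM1n k) (pow_nonneg hM2n k)))
  refine ⟨part1, ?_, ?_⟩
  · intro k x hx
    have h1 := part1 k x hx
    calc ‖lam ^ k * XtSL p r u0 x0 (2 * k) x‖
        = ‖lam‖ ^ k * ‖XtSL p r u0 x0 (2 * k) x‖ := by
          rw [norm_mul, norm_pow]
      _ ≤ ‖lam‖ ^ k * (M1 ^ k * M2 ^ k * (b - a) ^ (2 * k) / (Nat.factorial (2 * k))) :=
          mul_le_mul_of_nonneg_left h1 (pow_nonneg (norm_nonneg _) _)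
      _ = (‖lam‖ * M1 * M2 * (b - a) ^ 2) ^ k / (Nat.factorial (2 * k)) := by
          rw [mul_pow, mul_pow, mul_pow, ← pow_mul]
          ring
  · set c : ℝ := ‖lam‖ * M1 * M2 * (b - a) ^ 2 with hcdef
    have hc : 0 ≤ c := by
      apply mul_nonneg
      apply mul_nonneg
      apply mul_nonneg (norm_nonneg _) hM1n
      exact hM2n
      positivity
    apply Summable.of_nonneg_of_le
    · intro k
      exact div_nonneg (pow_nonneg hc _) (Nat.cast_nonneg _)
    · intro k
      show c ^ k / (Nat.factorial (2 * k) : ℝ) ≤ c ^ k / (Nat.factorial k : ℝ)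
      apply div_le_div_of_nonneg_left (pow_nonneg hc k) ?_ ?_
      · exact_mod_cast Nat.factorial_pos k
      · exact_mod_cast Nat.factorial_le (by omega)
    · exact Real.summable_pow_div_factorial c
end

section
/- The derivatives of the SPPS solutions admit the representations u1' = (u0'/u0) u1 + (1/(u0 p)) Σ_{k=1}^∞ λᵏ X̃⁽²ᵏ⁻¹⁾ and u2' = (u0'/u0) u2 + (1/(u0 p)) Σ_{k=0}^∞ λᵏ X⁽²ᵏ⁾ on (a,b), where the series converge uniformly on [a,b]. -/
open Set MeasureTheory Filter Finset
open scoped Topology Interval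

/-- The first SPPS solution `u1 = u0 ∑ λᵏ X̃⁽²ᵏ⁾`. -/
noncomputable def u1SPPS (p r u0 : ℝ → ℂ) (x0 : ℝ) (lam : ℂ) (x : ℝ) : ℂ :=
  u0 x * ∑' k : ℕ, lam ^ k * XtSL p r u0 x0 (2 * k) x

/-- The second SPPS solution `u2 = u0 ∑ λᵏ X⁽²ᵏ⁺¹⁾`. -/
noncomputable def u2SPPS (p r u0 : ℝ → ℂ) (x0 : ℝ) (lam : ℂ) (x : ℝ) : ℂ :=
  u0 x * ∑' k : ℕ, lam ^ k * XSL p r u0 x0 (2 * k + 1) x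

/-! ### Auxiliary lemmas -/

lemma spps_key_est (x0 x : ℝ) (n : ℕ) (g : ℝ → ℂ) (C : ℝ)
    (hg : ContinuousOn g (Set.uIcc x0 x))
    (hb : ∀ s ∈ Set.uIoc x0 x, ‖g s‖ ≤ C * |s - x0| ^ n) :
    ‖∫ s in x0..x, g s‖ ≤ C * |x - x0| ^ (n + 1) / (n + 1) := by
  have h1 : ‖∫ s in x0..x, g s‖ ≤ ∫ s in Ι x0 x, ‖g s‖ :=
    intervalIntegral.norm_integral_le_integral_norm_uIoc
  have hgi : IntegrableOn (fun s => ‖g s‖) (Ι x0 x) volume :=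
    (hg.norm.integrableOn_compact isCompact_uIcc).mono_set Set.uIoc_subset_uIcc
  have hfi : IntegrableOn (fun s => C * |s - x0| ^ n) (Ι x0 x) volume :=
    ((continuous_const.mul ((continuous_abs.comp
      (continuous_id.sub continuous_const)).pow n)).continuousOn.integrableOn_compact
      isCompact_uIcc).mono_set Set.uIoc_subset_uIcc
  have h2 : ∫ s in Ι x0 x, ‖g s‖ ≤ ∫ s in Ι x0 x, C * |s - x0| ^ n :=
    setIntegral_mono_on hgi hfi measurableSet_uIoc hb
  have h3 : ∫ s in Ι x0 x, C * |s - x0| ^ n = C * (|x - x0| ^ (n + 1) / (n + 1)) := by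
    rw [MeasureTheory.integral_const_mul, integral_pow_abs_sub_uIoc]
  calc ‖∫ s in x0..x, g s‖ ≤ ∫ s in Ι x0 x, C * |s - x0| ^ n := h1.trans h2
    _ = C * |x - x0| ^ (n + 1) / (n + 1) := by rw [h3]; ring

section master
variable {a b x0 : ℝ} {wOdd wEven : ℝ → ℂ} {M : ℝ}

lemma spps_weight_cont (hO : ContinuousOn wOdd (Set.Icc a b))
    (hE : ContinuousOn wEven (Set.Icc a b)) (n : ℕ) :
    ContinuousOn (fun s => if (n + 1) % 2 = 1 then wOdd s else wEven s) (Set.Icc a b) := by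
  by_cases h : (n + 1) % 2 = 1 <;> simp only [h, if_true, if_false] <;> first | exact hO | exact hE

lemma spps_fp_cont_bound (hx0 : x0 ∈ Set.Icc a b)
    (hO : ContinuousOn wOdd (Set.Icc a b)) (hE : ContinuousOn wEven (Set.Icc a b))
    (hMO : ∀ x ∈ Set.Icc a b, ‖wOdd x‖ ≤ M) (hME : ∀ x ∈ Set.Icc a b, ‖wEven x‖ ≤ M) (n : ℕ) :
    ContinuousOn (formalPower wOdd wEven x0 n) (Set.Icc a b) ∧
      ∀ x ∈ Set.Icc a b, ‖formalPower wOdd wEven x0 n x‖ ≤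
        M ^ n * |x - x0| ^ n / n.factorial := by
  have hab : a ≤ b := hx0.1.trans hx0.2
  have hicc : Set.uIcc a b = Set.Icc a b := Set.uIcc_of_le hab
  induction n with
  | zero => exact ⟨continuousOn_const, fun x hx => by simp [formalPower]⟩
  | succ n ih =>
    have hw := spps_weight_cont hO hE n
    have hwM : ∀ x ∈ Set.Icc a b, ‖if (n + 1) % 2 = 1 then wOdd x else wEven x‖ ≤ M := by
      intro x hx; by_cases h : (n + 1) % 2 = 1 <;> simp only [h, if_true, if_false]
      · exact hMO x hx
      · exact hME x hx
    have hM0 : 0 ≤ M := (norm_nonneg _).trans (hMO x0 hx0)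
    have hg : ContinuousOn
        (fun s => formalPower wOdd wEven x0 n s * (if (n + 1) % 2 = 1 then wOdd s else wEven s))
        (Set.Icc a b) := ih.1.mul hw
    have hrw : formalPower wOdd wEven x0 (n + 1) = fun x => ∫ s in x0..x,
        formalPower wOdd wEven x0 n s * (if (n + 1) % 2 = 1 then wOdd s else wEven s) := by
      funext x; rfl
    constructor
    · rw [hrw, ← hicc]
      exact intervalIntegral.continuousOn_primitive_interval'
        ((hg.mono hicc.subset).intervalIntegrable) (hicc ▸ hx0)
    · intro x hx
      have hsub : Set.uIcc x0 x ⊆ Set.Icc a b := by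
        rw [← hicc]; exact Set.uIcc_subset_uIcc (hicc ▸ hx0) (hicc ▸ hx)
      have hkey := spps_key_est x0 x n _ (M ^ (n + 1) / n.factorial) (hg.mono hsub) ?_
      · rw [hrw]
        refine hkey.trans (le_of_eq ?_)
        rw [Nat.factorial_succ]
        push_cast
        rw [div_mul_eq_mul_div, div_div, mul_comm ((n.factorial : ℕ) : ℝ)]
      · intro s hs
        have hs' : s ∈ Set.Icc a b := hsub (Set.uIoc_subset_uIcc hs)
        calc ‖formalPower wOdd wEven x0 n s * _‖
            = ‖formalPower wOdd wEven x0 n s‖ * ‖(if (n + 1) % 2 = 1 then wOdd s else wEven s)‖ :=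
              norm_mul _ _
          _ ≤ (M ^ n * |s - x0| ^ n / n.factorial) * M := by
              apply mul_le_mul (ih.2 s hs') (hwM s hs') (norm_nonneg _)
              positivity
          _ = M ^ (n + 1) / n.factorial * |s - x0| ^ n := by ring

lemma spps_fp_hasDerivAt (hab : a < b) (hx0 : x0 ∈ Set.Icc a b)
    (hcont : ∀ n, ContinuousOn (formalPower wOdd wEven x0 n) (Set.Icc a b))
    (hO : ContinuousOn wOdd (Set.Icc a b)) (hE : ContinuousOn wEven (Set.Icc a b))
    (n : ℕ) {x : ℝ} (hx : x ∈ Set.Ioo a b) :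
    HasDerivAt (formalPower wOdd wEven x0 (n + 1))
      (formalPower wOdd wEven x0 n x * (if (n + 1) % 2 = 1 then wOdd x else wEven x)) x := by
  have hicc : Set.uIcc a b = Set.Icc a b := Set.uIcc_of_le hab.le
  have hg : ContinuousOn
      (fun s => formalPower wOdd wEven x0 n s * (if (n + 1) % 2 = 1 then wOdd s else wEven s))
      (Set.Icc a b) := (hcont n).mul (spps_weight_cont hO hE n)
  have hxI : x ∈ Set.Icc a b := Set.Ioo_subset_Icc_self hx
  have hsub : Set.uIcc x0 x ⊆ Set.Icc a b := by
    rw [← hicc]; exact Set.uIcc_subset_uIcc (hicc ▸ hx0) (hicc ▸ hxI)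
  have hgIoo := hg.mono Set.Ioo_subset_Icc_self
  exact intervalIntegral.integral_hasDerivAt_right ((hg.mono hsub).intervalIntegrable)
    (hgIoo.stronglyMeasurableAtFilter isOpen_Ioo (μ := volume) x hx)
    (hgIoo.continuousAt (isOpen_Ioo.mem_nhds hx))

end master

theorem spps_derivative_representation
    (a b x0 : ℝ) (hab : a < b) (p q r u0 : ℝ → ℂ) (lam : ℂ)
    (hu0ne : ∀ x ∈ Set.Icc a b, u0 x ≠ 0)
    (hu0sol : SolvesSL p q a b u0 (fun _ => 0))
    (hc1 : ContinuousOn (fun x => u0 x ^ 2 * r x) (Set.Icc a b))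
    (hc2 : ContinuousOn (fun x => 1 / (u0 x ^ 2 * p x)) (Set.Icc a b))
    (hx0 : x0 ∈ Set.Icc a b) (hpc : ContinuousAt p x0) (hp0 : p x0 ≠ 0) :
    TendstoUniformlyOn
      (fun N x => ∑ k ∈ Finset.range N, lam ^ (k + 1) * XtSL p r u0 x0 (2 * k + 1) x)
      (fun x => ∑' k : ℕ, lam ^ (k + 1) * XtSL p r u0 x0 (2 * k + 1) x)
      Filter.atTop (Set.Icc a b) ∧
    TendstoUniformlyOn
      (fun N x => ∑ k ∈ Finset.range N, lam ^ k * XSL p r u0 x0 (2 * k) x)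
      (fun x => ∑' k : ℕ, lam ^ k * XSL p r u0 x0 (2 * k) x)
      Filter.atTop (Set.Icc a b) ∧
    (∀ x ∈ Set.Ioo a b,
      deriv (u1SPPS p r u0 x0 lam) x =
        (deriv u0 x / u0 x) * u1SPPS p r u0 x0 lam x +
          (1 / (u0 x * p x)) * ∑' k : ℕ, lam ^ (k + 1) * XtSL p r u0 x0 (2 * k + 1) x) ∧
    (∀ x ∈ Set.Ioo a b,
      deriv (u2SPPS p r u0 x0 lam) x =
        (deriv u0 x / u0 x) * u2SPPS p r u0 x0 lam x +
          (1 / (u0 x * p x)) * ∑' k : ℕ, lam ^ k * XSL p r u0 x0 (2 * k) x) := by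
  set w1 : ℝ → ℂ := fun s => u0 s ^ 2 * r s with hw1_def
  set w2 : ℝ → ℂ := fun s => 1 / (u0 s ^ 2 * p s) with hw2_def
  obtain ⟨M1, hM1⟩ := isCompact_Icc.exists_bound_of_continuousOn hc1
  obtain ⟨M2, hM2⟩ := isCompact_Icc.exists_bound_of_continuousOn hc2
  set M : ℝ := max (max M1 M2) 0 with hM_def
  have hM0 : 0 ≤ M := le_max_right _ _
  have hbw1 : ∀ x ∈ Set.Icc a b, ‖w1 x‖ ≤ M :=
    fun x hx => (hM1 x hx).trans ((le_max_left M1 M2).trans (le_max_left _ _))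
  have hbw2 : ∀ x ∈ Set.Icc a b, ‖w2 x‖ ≤ M :=
    fun x hx => (hM2 x hx).trans ((le_max_right M1 M2).trans (le_max_left _ _))
  set L : ℝ := b - a with hL_def
  have hL0 : 0 ≤ L := by simp [hL_def]; linarith
  have hdist : ∀ x ∈ Set.Icc a b, |x - x0| ≤ L := by
    intro x hx
    rw [abs_le]
    constructor <;> [skip; skip] <;>
      · have h1 := hx.1; have h2 := hx.2; have h3 := hx0.1; have h4 := hx0.2
        simp [hL_def]; linarith
  set A : ℝ := ‖lam‖ with hA_def
  have hA0 : 0 ≤ A := norm_nonneg _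
  set B : ℝ := M * L with hB_def
  have hB0 : 0 ≤ B := mul_nonneg hM0 hL0
  -- continuity and bounds for both families of formal powers
  have hXt := fun n => spps_fp_cont_bound hx0 hc1 hc2 hbw1 hbw2 n
  have hX := fun n => spps_fp_cont_bound hx0 hc2 hc1 hbw2 hbw1 n
  have hXt_eq : XtSL p r u0 x0 = formalPower w1 w2 x0 := rfl
  have hX_eq : XSL p r u0 x0 = formalPower w2 w1 x0 := rfl
  -- generic term bound
  have chain : ∀ (F : ℕ → ℝ → ℂ),
      (∀ n, ∀ x ∈ Set.Icc a b, ‖F n x‖ ≤ M ^ n * |x - x0| ^ n / n.factorial) →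
      ∀ (k n : ℕ), ∀ x ∈ Set.Icc a b, ‖lam ^ k * F n x‖ ≤ A ^ k * B ^ n / n.factorial := by
    intro F hF k n x hx
    have h1 : ‖lam ^ k * F n x‖ = A ^ k * ‖F n x‖ := by
      rw [norm_mul, norm_pow]
    rw [h1]
    have h2 : ‖F n x‖ ≤ M ^ n * L ^ n / n.factorial := by
      refine (hF n x hx).trans ?_
      have hfact : (0:ℝ) < n.factorial := by exact_mod_cast n.factorial_pos
      have hpow' : M ^ n * |x - x0| ^ n ≤ M ^ n * L ^ n := mul_le_mul_of_nonneg_left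
        (pow_le_pow_left₀ (abs_nonneg _) (hdist x hx) n) (pow_nonneg hM0 n)
      gcongr
    calc A ^ k * ‖F n x‖ ≤ A ^ k * (M ^ n * L ^ n / n.factorial) := by
          exact mul_le_mul_of_nonneg_left h2 (pow_nonneg hA0 _)
      _ = A ^ k * B ^ n / n.factorial := by rw [hB_def, mul_pow]; ring
  set c : ℕ → ℝ := fun k => (A * B ^ 2) ^ k / k.factorial with hc_def
  have hc0 : ∀ k, 0 ≤ c k := by
    intro k
    have : (0:ℝ) ≤ (A * B ^ 2) ^ k := pow_nonneg (mul_nonneg hA0 (pow_nonneg hB0 _)) _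
    positivity
  have hcsum : Summable c := Real.summable_pow_div_factorial _
  have hpow : ∀ k : ℕ, (A * B ^ 2) ^ k = A ^ k * B ^ (2 * k) := by
    intro k; rw [mul_pow, ← pow_mul]
  -- comparison inequalities
  have le1 : ∀ k : ℕ, A ^ (k + 1) * B ^ (2 * k + 1) / ((2 * k + 1).factorial : ℝ) ≤
      A * B * c k := by
    intro k
    calc A ^ (k + 1) * B ^ (2 * k + 1) / ((2 * k + 1).factorial : ℝ)
        ≤ A ^ (k + 1) * B ^ (2 * k + 1) / (k.factorial : ℝ) := by
          gcongr
          omega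
      _ = A * B * c k := by rw [hc_def]; dsimp only; rw [hpow]; ring
  have le2 : ∀ k : ℕ, A ^ k * B ^ (2 * k) / (((2 * k).factorial : ℕ) : ℝ) ≤ c k := by
    intro k
    calc A ^ k * B ^ (2 * k) / (((2 * k).factorial : ℕ) : ℝ)
        ≤ A ^ k * B ^ (2 * k) / (k.factorial : ℝ) := by
          gcongr
          omega
      _ = c k := by rw [hc_def]; dsimp only; rw [hpow]
  have le3 : ∀ k : ℕ, A ^ k * B ^ (2 * k + 1) / (((2 * k + 1).factorial : ℕ) : ℝ) ≤ B * c k := by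
    intro k
    calc A ^ k * B ^ (2 * k + 1) / (((2 * k + 1).factorial : ℕ) : ℝ)
        ≤ A ^ k * B ^ (2 * k + 1) / (k.factorial : ℝ) := by
          gcongr
          omega
      _ = B * c k := by rw [hc_def]; dsimp only; rw [hpow, pow_succ]; ring
  -- term bounds for the four relevant series
  have bXt1 : ∀ (k : ℕ), ∀ x ∈ Set.Icc a b,
      ‖lam ^ (k + 1) * XtSL p r u0 x0 (2 * k + 1) x‖ ≤ A * B * c k := by
    intro k x hx
    exact (chain (formalPower w1 w2 x0) (fun n => (hXt n).2) (k + 1) (2 * k + 1) x hx).trans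
      (le1 k)
  have bXt0 : ∀ (k : ℕ), ∀ x ∈ Set.Icc a b,
      ‖lam ^ k * XtSL p r u0 x0 (2 * k) x‖ ≤ c k := by
    intro k x hx
    exact (chain (formalPower w1 w2 x0) (fun n => (hXt n).2) k (2 * k) x hx).trans (le2 k)
  have bX0 : ∀ (k : ℕ), ∀ x ∈ Set.Icc a b,
      ‖lam ^ k * XSL p r u0 x0 (2 * k) x‖ ≤ c k := by
    intro k x hx
    exact (chain (formalPower w2 w1 x0) (fun n => (hX n).2) k (2 * k) x hx).trans (le2 k)
  have bX1 : ∀ (k : ℕ), ∀ x ∈ Set.Icc a b,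
      ‖lam ^ k * XSL p r u0 x0 (2 * k + 1) x‖ ≤ B * c k := by
    intro k x hx
    exact (chain (formalPower w2 w1 x0) (fun n => (hX n).2) k (2 * k + 1) x hx).trans (le3 k)
  refine ⟨?_, ?_, ?_, ?_⟩
  · exact tendstoUniformlyOn_tsum_nat (hcsum.mul_left (A * B)) bXt1
  · exact tendstoUniformlyOn_tsum_nat hcsum bX0
  -- derivative of u1SPPS
  · intro x hx
    have hxI : x ∈ Set.Icc a b := Set.Ioo_subset_Icc_self hx
    have hu0x : u0 x ≠ 0 := hu0ne x hxI
    -- algebraic identity used at the end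
    have halg : ∀ S T : ℂ,
        deriv u0 x * S + u0 x * (T * w2 x) =
          deriv u0 x / u0 x * (u0 x * S) + 1 / (u0 x * p x) * T := by
      intro S T
      have h1 : deriv u0 x / u0 x * (u0 x * S) = deriv u0 x * S := by
        field_simp
      have h2 : u0 x * (T * w2 x) = 1 / (u0 x * p x) * T := by
        rw [show w2 x = 1 / (u0 x ^ 2 * p x) from rfl]
        by_cases hp : p x = 0
        · simp [hp]
        · field_simp
      rw [h1, h2]
    -- the derivative candidates
    set g1' : ℕ → ℝ → ℂ := fun k y => Nat.rec 0
      (fun j _ => lam ^ (j + 1) * (XtSL p r u0 x0 (2 * j + 1) y * w2 y)) k with hg1'_def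
    set W1 : ℕ → ℝ := fun k => Nat.rec 0 (fun j _ => M * (A * B * c j)) k with hW1_def
    have hW1sum : Summable W1 := by
      rw [← summable_nat_add_iff 1]
      exact (hcsum.mul_left (A * B)).mul_left M
    have hg1d : ∀ k (y : ℝ), y ∈ Set.Ioo a b →
        HasDerivAt (fun z => lam ^ k * XtSL p r u0 x0 (2 * k) z) (g1' k y) y := by
      intro k y hy
      cases k with
      | zero =>
        have he : (fun z : ℝ => lam ^ 0 * XtSL p r u0 x0 (2 * 0) z) = fun _ => (1 : ℂ) := by
          funext z; show lam ^ 0 * formalPower w1 w2 x0 0 z = 1; simp [formalPower]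
        rw [he]
        exact hasDerivAt_const y 1
      | succ j =>
        have h2 : 2 * (j + 1) = (2 * j + 1) + 1 := by ring
        have hd := spps_fp_hasDerivAt hab hx0 (fun n => (hXt n).1) hc1 hc2 (2 * j + 1) hy
        rw [if_neg (by omega)] at hd
        have hd2 := hd.const_mul (lam ^ (j + 1))
        rw [h2]
        exact hd2
    have hg1b : ∀ k (y : ℝ), y ∈ Set.Ioo a b → ‖g1' k y‖ ≤ W1 k := by
      intro k y hy
      cases k with
      | zero => show ‖(0 : ℂ)‖ ≤ (0 : ℝ); simp
      | succ j =>
        have hyI : y ∈ Set.Icc a b := Set.Ioo_subset_Icc_self hy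
        show ‖lam ^ (j + 1) * (XtSL p r u0 x0 (2 * j + 1) y * w2 y)‖ ≤ M * (A * B * c j)
        rw [← mul_assoc, norm_mul]
        calc ‖lam ^ (j + 1) * XtSL p r u0 x0 (2 * j + 1) y‖ * ‖w2 y‖
            ≤ (A * B * c j) * M := mul_le_mul (bXt1 j y hyI) (hbw2 y hyI) (norm_nonneg _)
              (mul_nonneg (mul_nonneg hA0 hB0) (hc0 j))
          _ = M * (A * B * c j) := mul_comm _ _
    have hgsum : Summable (fun k => lam ^ k * XtSL p r u0 x0 (2 * k) x) :=
      Summable.of_norm_bounded hcsum (fun k => bXt0 k x hxI)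
    have hS1 : HasDerivAt (fun y => ∑' k, lam ^ k * XtSL p r u0 x0 (2 * k) y)
        (∑' k, g1' k x) x :=
      hasDerivAt_tsum_of_isPreconnected hW1sum isOpen_Ioo isPreconnected_Ioo hg1d hg1b
        hx hgsum hx
    have hg1'sum : Summable (fun k => g1' k x) :=
      Summable.of_norm_bounded hW1sum (fun k => hg1b k x hx)
    have htsum : (∑' k, g1' k x) =
        (∑' k, lam ^ (k + 1) * XtSL p r u0 x0 (2 * k + 1) x) * w2 x := by
      calc (∑' k, g1' k x) = g1' 0 x + ∑' j, g1' (j + 1) x := Summable.tsum_eq_zero_add hg1'sum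
        _ = ∑' j, (lam ^ (j + 1) * XtSL p r u0 x0 (2 * j + 1) x) * w2 x := by
            rw [show g1' 0 x = 0 from rfl, zero_add]
            exact tsum_congr fun j =>
              (mul_assoc (lam ^ (j + 1)) (XtSL p r u0 x0 (2 * j + 1) x) (w2 x)).symm
        _ = (∑' k, lam ^ (k + 1) * XtSL p r u0 x0 (2 * k + 1) x) * w2 x := tsum_mul_right
    have hu0d : HasDerivAt u0 (deriv u0 x) x := (hu0sol.1 x hx).hasDerivAt
    have hprod := hu0d.mul hS1
    have hderiv : deriv (u1SPPS p r u0 x0 lam) x =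
        deriv u0 x * (∑' k, lam ^ k * XtSL p r u0 x0 (2 * k) x) +
          u0 x * ((∑' k, lam ^ (k + 1) * XtSL p r u0 x0 (2 * k + 1) x) * w2 x) := by
      rw [← htsum]
      exact hprod.deriv
    rw [hderiv, show u1SPPS p r u0 x0 lam x =
      u0 x * ∑' k, lam ^ k * XtSL p r u0 x0 (2 * k) x from rfl]
    exact halg _ _
  -- derivative of u2SPPS
  · intro x hx
    have hxI : x ∈ Set.Icc a b := Set.Ioo_subset_Icc_self hx
    have hu0x : u0 x ≠ 0 := hu0ne x hxI
    have halg : ∀ S T : ℂ,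
        deriv u0 x * S + u0 x * (T * w2 x) =
          deriv u0 x / u0 x * (u0 x * S) + 1 / (u0 x * p x) * T := by
      intro S T
      have h1 : deriv u0 x / u0 x * (u0 x * S) = deriv u0 x * S := by
        field_simp
      have h2 : u0 x * (T * w2 x) = 1 / (u0 x * p x) * T := by
        rw [show w2 x = 1 / (u0 x ^ 2 * p x) from rfl]
        by_cases hp : p x = 0
        · simp [hp]
        · field_simp
      rw [h1, h2]
    set g2' : ℕ → ℝ → ℂ := fun k y =>
      lam ^ k * (XSL p r u0 x0 (2 * k) y * w2 y) with hg2'_def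
    have hW2sum : Summable (fun k => M * c k) := hcsum.mul_left M
    have hg2d : ∀ k (y : ℝ), y ∈ Set.Ioo a b →
        HasDerivAt (fun z => lam ^ k * XSL p r u0 x0 (2 * k + 1) z) (g2' k y) y := by
      intro k y hy
      have hd := spps_fp_hasDerivAt hab hx0 (fun n => (hX n).1) hc2 hc1 (2 * k) hy
      rw [if_pos (by omega)] at hd
      exact hd.const_mul (lam ^ k)
    have hg2b : ∀ k (y : ℝ), y ∈ Set.Ioo a b → ‖g2' k y‖ ≤ M * c k := by
      intro k y hy
      have hyI : y ∈ Set.Icc a b := Set.Ioo_subset_Icc_self hy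
      show ‖lam ^ k * (XSL p r u0 x0 (2 * k) y * w2 y)‖ ≤ M * c k
      rw [← mul_assoc, norm_mul]
      calc ‖lam ^ k * XSL p r u0 x0 (2 * k) y‖ * ‖w2 y‖
          ≤ c k * M := mul_le_mul (bX0 k y hyI) (hbw2 y hyI) (norm_nonneg _) (hc0 k)
        _ = M * c k := mul_comm _ _
    have hgsum : Summable (fun k => lam ^ k * XSL p r u0 x0 (2 * k + 1) x) :=
      Summable.of_norm_bounded (hcsum.mul_left B) (fun k => bX1 k x hxI)
    have hS2 : HasDerivAt (fun y => ∑' k, lam ^ k * XSL p r u0 x0 (2 * k + 1) y)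
        (∑' k, g2' k x) x :=
      hasDerivAt_tsum_of_isPreconnected hW2sum isOpen_Ioo isPreconnected_Ioo hg2d hg2b
        hx hgsum hx
    have htsum : (∑' k, g2' k x) =
        (∑' k, lam ^ k * XSL p r u0 x0 (2 * k) x) * w2 x := by
      rw [← tsum_mul_right]
      exact tsum_congr fun k =>
        (mul_assoc (lam ^ k) (XSL p r u0 x0 (2 * k) x) (w2 x)).symm
    have hu0d : HasDerivAt u0 (deriv u0 x) x := (hu0sol.1 x hx).hasDerivAt
    have hprod := hu0d.mul hS2
    have hderiv : deriv (u2SPPS p r u0 x0 lam) x =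
        deriv u0 x * (∑' k, lam ^ k * XSL p r u0 x0 (2 * k + 1) x) +
          u0 x * ((∑' k, lam ^ k * XSL p r u0 x0 (2 * k) x) * w2 x) := by
      rw [← htsum]
      exact hprod.deriv
    rw [hderiv, show u2SPPS p r u0 x0 lam x =
      u0 x * ∑' k, lam ^ k * XSL p r u0 x0 (2 * k + 1) x from rfl]
    exact halg _ _
end

section
/- Suppose u : ℝ → ℂ is a continuously differentiable solution of u'' + (k² n(x)² − β²) u = 0 on ℝ such that u(x) = e^{−i k1 x} + R e^{i k1 x} for x ≤ 0 and u(x) = T e^{−i k2 x} for x ≥ d, for some complex constants R and T. If the quantity [y1'(d) − k1 k2 y2(d)] + i[k2 y1(d) + k1 y2'(d)] is nonzero, then R = ( −k1 k2 y2(d) − y1'(d) − i k2 y1(d) + i k1 y2'(d) ) / ( [y1'(d) − k1 k2 y2(d)] + i[k2 y1(d) + k1 y2'(d)] ) and T = 2 i k1 ( y1(d) y2'(d) − y1'(d) y2(d) ) e^{i k2 d} / ( [y1'(d) − k1 k2 y2(d)] + i[k2 y1(d) + k1 y2'(d)] ). -/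
open Set Filter
open scoped Topology

theorem reflection_transmission_coefficients
    (k beta d n1 n2 : ℝ) (hk : 0 < k) (hd : 0 < d)
    (n : ℝ → ℝ) (hn : Continuous n)
    (hn1 : ∀ x ≤ (0 : ℝ), n x = n1) (hn2 : ∀ x ≥ d, n x = n2)
    (hk1 : 0 < k ^ 2 * n1 ^ 2 - beta ^ 2) (hk2 : 0 < k ^ 2 * n2 ^ 2 - beta ^ 2)
    (y1 y2 : ℝ → ℂ)
    (hy1d : Differentiable ℝ y1) (hy1d2 : Differentiable ℝ (deriv y1))
    (hy1eq : ∀ x ∈ Set.Icc 0 d,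
      deriv (deriv y1) x + ((k : ℂ) ^ 2 * (n x : ℂ) ^ 2 - (beta : ℂ) ^ 2) * y1 x = 0)
    (hy1i : y1 0 = 1) (hy1i' : deriv y1 0 = 0)
    (hy2d : Differentiable ℝ y2) (hy2d2 : Differentiable ℝ (deriv y2))
    (hy2eq : ∀ x ∈ Set.Icc 0 d,
      deriv (deriv y2) x + ((k : ℂ) ^ 2 * (n x : ℂ) ^ 2 - (beta : ℂ) ^ 2) * y2 x = 0)
    (hy2i : y2 0 = 0) (hy2i' : deriv y2 0 = 1)
    (u : ℝ → ℂ) (R T : ℂ)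
    (hud : Differentiable ℝ u) (hud2 : Differentiable ℝ (deriv u))
    (hueq : ∀ x : ℝ,
      deriv (deriv u) x + ((k : ℂ) ^ 2 * (n x : ℂ) ^ 2 - (beta : ℂ) ^ 2) * u x = 0)
    (huleft : ∀ x ≤ (0 : ℝ),
      u x = Complex.exp (-Complex.I * (Real.sqrt (k ^ 2 * n1 ^ 2 - beta ^ 2) : ℂ) * x) +
        R * Complex.exp (Complex.I * (Real.sqrt (k ^ 2 * n1 ^ 2 - beta ^ 2) : ℂ) * x))
    (huright : ∀ x ≥ d,
      u x = T * Complex.exp (-Complex.I * (Real.sqrt (k ^ 2 * n2 ^ 2 - beta ^ 2) : ℂ) * x))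
    (hden : (deriv y1 d -
        (Real.sqrt (k ^ 2 * n1 ^ 2 - beta ^ 2) : ℂ) *
          (Real.sqrt (k ^ 2 * n2 ^ 2 - beta ^ 2) : ℂ) * y2 d) +
      Complex.I * ((Real.sqrt (k ^ 2 * n2 ^ 2 - beta ^ 2) : ℂ) * y1 d +
        (Real.sqrt (k ^ 2 * n1 ^ 2 - beta ^ 2) : ℂ) * deriv y2 d) ≠ 0) :
    R = (-(Real.sqrt (k ^ 2 * n1 ^ 2 - beta ^ 2) : ℂ) *
          (Real.sqrt (k ^ 2 * n2 ^ 2 - beta ^ 2) : ℂ) * y2 d - deriv y1 d -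
          Complex.I * (Real.sqrt (k ^ 2 * n2 ^ 2 - beta ^ 2) : ℂ) * y1 d +
          Complex.I * (Real.sqrt (k ^ 2 * n1 ^ 2 - beta ^ 2) : ℂ) * deriv y2 d) /
        ((deriv y1 d -
          (Real.sqrt (k ^ 2 * n1 ^ 2 - beta ^ 2) : ℂ) *
            (Real.sqrt (k ^ 2 * n2 ^ 2 - beta ^ 2) : ℂ) * y2 d) +
        Complex.I * ((Real.sqrt (k ^ 2 * n2 ^ 2 - beta ^ 2) : ℂ) * y1 d +
          (Real.sqrt (k ^ 2 * n1 ^ 2 - beta ^ 2) : ℂ) * deriv y2 d)) ∧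
    T = 2 * Complex.I * (Real.sqrt (k ^ 2 * n1 ^ 2 - beta ^ 2) : ℂ) *
          (y1 d * deriv y2 d - deriv y1 d * y2 d) *
          Complex.exp (Complex.I * (Real.sqrt (k ^ 2 * n2 ^ 2 - beta ^ 2) : ℂ) * d) /
        ((deriv y1 d -
          (Real.sqrt (k ^ 2 * n1 ^ 2 - beta ^ 2) : ℂ) *
            (Real.sqrt (k ^ 2 * n2 ^ 2 - beta ^ 2) : ℂ) * y2 d) +
        Complex.I * ((Real.sqrt (k ^ 2 * n2 ^ 2 - beta ^ 2) : ℂ) * y1 d +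
          (Real.sqrt (k ^ 2 * n1 ^ 2 - beta ^ 2) : ℂ) * deriv y2 d)) := by
  classical
  set k1c : ℂ := ((Real.sqrt (k ^ 2 * n1 ^ 2 - beta ^ 2) : ℝ) : ℂ) with hk1c
  set k2c : ℂ := ((Real.sqrt (k ^ 2 * n2 ^ 2 - beta ^ 2) : ℝ) : ℂ) with hk2c
  set Q : ℝ → ℂ := fun t => (k : ℂ) ^ 2 * (n t : ℂ) ^ 2 - (beta : ℂ) ^ 2 with hQ
  have hQc : Continuous Q := by
    apply Continuous.sub
    · exact continuous_const.mul ((Complex.continuous_ofReal.comp hn).pow 2)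
    · exact continuous_const
  -- bound on Q
  obtain ⟨C, hC⟩ := (isCompact_Icc : IsCompact (Icc (0:ℝ) d)).exists_bound_of_continuousOn
    hQc.continuousOn
  set M : ℝ := max C 1 with hM
  have hM1 : (1:ℝ) ≤ M := le_max_right _ _
  have hQb : ∀ t : ℝ, ‖Q t‖ ≤ M := by
    intro t
    rcases le_total t 0 with ht | ht
    · have : Q t = Q 0 := by simp [hQ, hn1 t ht, hn1 0 le_rfl]
      rw [this]
      exact le_trans (hC 0 ⟨le_rfl, hd.le⟩) (le_max_left _ _)
    rcases le_total d t with ht' | ht'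
    · have : Q t = Q d := by simp [hQ, hn2 t ht', hn2 d le_rfl]
      rw [this]
      exact le_trans (hC d ⟨hd.le, le_rfl⟩) (le_max_left _ _)
    · exact le_trans (hC t ⟨ht, ht'⟩) (le_max_left _ _)
  -- the vector field
  set vec : ℝ → ℂ × ℂ → ℂ × ℂ := fun t p => (p.2, -Q t * p.1) with hvec
  have hLip : ∀ t, LipschitzWith M.toNNReal (vec t) := by
    intro t
    apply LipschitzWith.of_dist_le_mul
    intro p q
    have hcoe : (M.toNNReal : ℝ) = M := Real.coe_toNNReal _ (by linarith)
    rw [hcoe, Prod.dist_eq]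
    apply max_le
    · have h1 : dist p.2 q.2 ≤ dist p q := by
        rw [Prod.dist_eq]; exact le_max_right _ _
      nlinarith [dist_nonneg (x := p) (y := q)]
    · have h1 : dist (-Q t * p.1) (-Q t * q.1) = ‖Q t‖ * dist p.1 q.1 := by
        rw [dist_eq_norm, dist_eq_norm, ← mul_sub, norm_mul, norm_neg]
      have h2 : dist p.1 q.1 ≤ dist p q := by
        rw [Prod.dist_eq]; exact le_max_left _ _
      rw [h1]
      have := hQb t
      nlinarith [dist_nonneg (x := p.1) (y := q.1), norm_nonneg (Q t), dist_nonneg (x := p) (y := q)]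
  -- the comparison solution
  set c0 : ℂ := Complex.I * k1c * (R - 1) with hc0
  set vv : ℝ → ℂ := fun t => (1 + R) * y1 t + c0 * y2 t with hvv
  set dv : ℝ → ℂ := fun t => (1 + R) * deriv y1 t + c0 * deriv y2 t with hdv
  have hvder : ∀ t, HasDerivAt vv (dv t) t := fun t =>
    (((hy1d t).hasDerivAt.const_mul (1 + R)).add ((hy2d t).hasDerivAt.const_mul c0))
  -- F and G
  set F : ℝ → ℂ × ℂ := fun t => (u t, deriv u t) with hF
  set G : ℝ → ℂ × ℂ := fun t => (vv t, dv t) with hG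
  have hFc : ContinuousOn F (Icc 0 d) :=
    (hud.continuous.prodMk hud2.continuous).continuousOn
  have hGc : ContinuousOn G (Icc 0 d) := by
    apply Continuous.continuousOn
    apply Continuous.prodMk
    · exact (continuous_const.mul hy1d.continuous).add (continuous_const.mul hy2d.continuous)
    · exact (continuous_const.mul hy1d2.continuous).add (continuous_const.mul hy2d2.continuous)
  have hF' : ∀ t ∈ Ico (0:ℝ) d, HasDerivWithinAt F (vec t (F t)) (Ici t) t := by
    intro t _
    have h2 : deriv (deriv u) t = -Q t * u t := by
      have := hueq t
      simp only [hQ]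
      linear_combination this
    have h1 : HasDerivAt F (deriv u t, -Q t * u t) t := by
      rw [← h2]
      exact ((hud t).hasDerivAt).prodMk ((hud2 t).hasDerivAt)
    exact h1.hasDerivWithinAt
  have hG' : ∀ t ∈ Ico (0:ℝ) d, HasDerivWithinAt G (vec t (G t)) (Ici t) t := by
    intro t ht
    have ht' : t ∈ Icc (0:ℝ) d := ⟨ht.1, ht.2.le⟩
    have h1 : HasDerivAt dv ((1 + R) * deriv (deriv y1) t + c0 * deriv (deriv y2) t) t :=
      (((hy1d2 t).hasDerivAt.const_mul (1 + R)).add ((hy2d2 t).hasDerivAt.const_mul c0))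
    have h2 : (1 + R) * deriv (deriv y1) t + c0 * deriv (deriv y2) t = -Q t * vv t := by
      simp only [hQ, hvv]
      linear_combination (1 + R) * hy1eq t ht' + c0 * hy2eq t ht'
    rw [h2] at h1
    exact ((hvder t).prodMk h1).hasDerivWithinAt
  -- initial conditions
  have hx0 : HasDerivAt (fun x : ℝ => (x : ℂ)) 1 0 := by
    simpa using (hasDerivAt_id' (0:ℝ)).ofReal_comp
  have hu0 : u 0 = 1 + R := by
    have := huleft 0 le_rfl
    simpa using this
  have hu0' : deriv u 0 = c0 := by
    have hfd : HasDerivAt (fun x : ℝ =>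
        Complex.exp (-Complex.I * k1c * x) + R * Complex.exp (Complex.I * k1c * x)) c0 0 := by
      have h1 := (hx0.const_mul (-Complex.I * k1c)).cexp
      have h2 := ((hx0.const_mul (Complex.I * k1c)).cexp).const_mul R
      have h := h1.add h2
      have hval : Complex.exp (-Complex.I * k1c * ((0:ℝ):ℂ)) * (-Complex.I * k1c * 1) +
          R * (Complex.exp (Complex.I * k1c * ((0:ℝ):ℂ)) * (Complex.I * k1c * 1)) = c0 := by
        simp [hc0]
        ring
      rw [hval] at h
      exact h
    have hW1 : HasDerivWithinAt u c0 (Iic 0) 0 :=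
      (hfd.hasDerivWithinAt).congr (fun y hy => huleft y hy) (huleft 0 le_rfl)
    have hW2 : HasDerivWithinAt u (deriv u 0) (Iic 0) 0 :=
      ((hud 0).hasDerivAt).hasDerivWithinAt
    exact ((uniqueDiffOn_Iic 0) 0 self_mem_Iic).eq_deriv _ hW2 hW1
  have h0 : F 0 = G 0 := by
    simp only [hF, hG, Prod.mk.injEq, hvv, hdv]
    constructor
    · rw [hu0, hy1i, hy2i]; ring
    · rw [hu0', hy1i', hy2i']; ring
  -- uniqueness
  have key : EqOn F G (Icc 0 d) :=
    ODE_solution_unique_of_mem_Icc_right (v := vec) (s := fun _ => (univ : Set (ℂ × ℂ)))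
      (fun t _ => (hLip t).lipschitzOnWith) hFc hF' (fun _ _ => mem_univ _)
      hGc hG' (fun _ _ => mem_univ _) h0
  have hkeyd := key ⟨hd.le, le_rfl⟩
  simp only [hF, hG, Prod.mk.injEq] at hkeyd
  obtain ⟨hud_eq, hu'd_eq⟩ := hkeyd
  -- values at d from the right side
  set En : ℂ := Complex.exp (-Complex.I * k2c * d) with hEn
  set Ep : ℂ := Complex.exp (Complex.I * k2c * d) with hEp
  have hE : En * Ep = 1 := by
    rw [hEn, hEp, ← Complex.exp_add]
    have : -Complex.I * k2c * d + Complex.I * k2c * d = 0 := by ring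
    rw [this, Complex.exp_zero]
  have hudr : u d = T * En := huright d le_rfl
  have hu'dr : deriv u d = T * (En * (-Complex.I * k2c)) := by
    have hxd : HasDerivAt (fun x : ℝ => (x : ℂ)) 1 d := by
      simpa using (hasDerivAt_id' d).ofReal_comp
    have hgd : HasDerivAt (fun x : ℝ => T * Complex.exp (-Complex.I * k2c * x))
        (T * (En * (-Complex.I * k2c))) d := by
      have h := ((hxd.const_mul (-Complex.I * k2c)).cexp).const_mul T
      have hval : T * (Complex.exp (-Complex.I * k2c * ((d:ℝ):ℂ)) * (-Complex.I * k2c * 1)) =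
          T * (En * (-Complex.I * k2c)) := by rw [hEn]; ring
      rw [hval] at h
      exact h
    have hW1 : HasDerivWithinAt u (T * (En * (-Complex.I * k2c))) (Ici d) d :=
      (hgd.hasDerivWithinAt).congr (fun y hy => huright y hy) (huright d le_rfl)
    have hW2 : HasDerivWithinAt u (deriv u d) (Ici d) d :=
      ((hud d).hasDerivAt).hasDerivWithinAt
    exact ((uniqueDiffOn_Ici d) d self_mem_Ici).eq_deriv _ hW2 hW1
  -- the two linear equations
  have E1 : (1 + R) * y1 d + c0 * y2 d = T * En := by
    have h : vv d = (1 + R) * y1 d + c0 * y2 d := rfl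
    rw [← h, ← hud_eq, hudr]
  have E2 : (1 + R) * deriv y1 d + c0 * deriv y2 d = T * (En * (-Complex.I * k2c)) := by
    have : dv d = (1 + R) * deriv y1 d + c0 * deriv y2 d := rfl
    rw [← this, ← hu'd_eq, hu'dr]
  have hR : R * ((deriv y1 d - k1c * k2c * y2 d) +
      Complex.I * (k2c * y1 d + k1c * deriv y2 d)) =
      (-k1c * k2c * y2 d - deriv y1 d - Complex.I * k2c * y1 d + Complex.I * k1c * deriv y2 d) := by
    linear_combination Complex.I * k2c * E1 + E2 - (deriv y2 d + Complex.I * k2c * y2 d) * hc0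
      + (1 - R) * k1c * k2c * y2 d * Complex.I_sq
  constructor
  · rw [eq_div_iff hden]
    linear_combination hR
  · rw [eq_div_iff hden]
    linear_combination (-(Ep * ((deriv y1 d - k1c * k2c * y2 d) +
        Complex.I * (k2c * y1 d + k1c * deriv y2 d)))) * E1
      - T * ((deriv y1 d - k1c * k2c * y2 d) +
        Complex.I * (k2c * y1 d + k1c * deriv y2 d)) * hE
      + Ep * (y1 d) * hR + Complex.I * k1c * Ep * (y2 d) * hR
      + (Ep * ((deriv y1 d - k1c * k2c * y2 d) +
        Complex.I * (k2c * y1 d + k1c * deriv y2 d)) * y2 d) * hc0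
      - 2 * k1c * k2c * y2 d * y1 d * Ep * Complex.I_sq
end

section
/- For normal incidence (β = 0) in unabsorbent media, the reflection and transmission coefficients satisfy the energy conservation relation |R|² + n2 |T|² / n1 = 1. That is, if u : ℝ → ℂ is a continuously differentiable solution of u'' + k² n(x)² u = 0 on ℝ with u(x) = e^{−i k n1 x} + R e^{i k n1 x} for x ≤ 0 and u(x) = T e^{−i k n2 x} for x ≥ d, then |R|² + (n2/n1) |T|² = 1. -/
open Set Filter
open scoped Topology

private lemma expDerivAux (c : ℂ) (x : ℝ) :
    HasDerivAt (fun y : ℝ => Complex.exp (c * y)) (c * Complex.exp (c * x)) x := by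
  have h1 : HasDerivAt (fun w : ℂ => Complex.exp (c * w)) (c * Complex.exp (c * x)) (x : ℂ) := by
    simpa [mul_comm] using ((hasDerivAt_id (x : ℂ)).const_mul c).cexp
  exact h1.comp_ofReal

private lemma starExpAux (c : ℂ) (x : ℝ) :
    star (Complex.exp (c * x)) = Complex.exp (star c * x) := by
  rw [show star (Complex.exp (c * x)) = (starRingEnd ℂ) (Complex.exp (c * x)) from rfl,
    ← Complex.exp_conj]
  simp [Complex.conj_ofReal]

theorem energy_conservation_normal_incidence
    (k d n1 n2 : ℝ) (hk : 0 < k) (hd : 0 < d)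
    (n : ℝ → ℝ) (hn : Continuous n) (hnpos : ∀ x, 0 < n x)
    (hn1 : ∀ x ≤ (0 : ℝ), n x = n1) (hn2 : ∀ x ≥ d, n x = n2)
    (hn1pos : 0 < n1) (hn2pos : 0 < n2)
    (u : ℝ → ℂ) (R T : ℂ)
    (hud : Differentiable ℝ u) (hud2 : Differentiable ℝ (deriv u))
    (hueq : ∀ x : ℝ,
      deriv (deriv u) x + (k : ℂ) ^ 2 * (n x : ℂ) ^ 2 * u x = 0)
    (huleft : ∀ x ≤ (0 : ℝ),
      u x = Complex.exp (-Complex.I * (k : ℂ) * (n1 : ℂ) * x) +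
        R * Complex.exp (Complex.I * (k : ℂ) * (n1 : ℂ) * x))
    (huright : ∀ x ≥ d,
      u x = T * Complex.exp (-Complex.I * (k : ℂ) * (n2 : ℂ) * x)) :
    ‖R‖ ^ 2 + n2 * ‖T‖ ^ 2 / n1 = 1 := by
  set W : ℝ → ℂ := fun x => star (u x) * deriv u x - u x * star (deriv u x) with hWdef
  -- W has derivative 0 everywhere
  have hW0 : ∀ x : ℝ, HasDerivAt W 0 x := by
    intro x
    have hu : HasDerivAt u (deriv u x) x := (hud x).hasDerivAt
    have hu' : HasDerivAt (deriv u) (deriv (deriv u) x) x := (hud2 x).hasDerivAt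
    have h := ((hu.star.mul hu').sub (hu.mul hu'.star))
    have hdd : deriv (deriv u) x = -((k : ℂ) ^ 2 * (n x : ℂ) ^ 2 * u x) :=
      eq_neg_of_add_eq_zero_left (hueq x)
    refine HasDerivAt.congr_deriv h ?_
    rw [hdd]
    simp only [star_neg, star_mul', star_pow, Complex.star_def, Complex.conj_ofReal]
    ring
  have hWconst : W (-1) = W (d + 1) :=
    is_const_of_deriv_eq_zero (fun x => (hW0 x).differentiableAt)
      (fun x => (hW0 x).deriv) _ _
  -- compute W at -1
  set v : ℝ → ℂ := fun x => Complex.exp (-Complex.I * (k : ℂ) * (n1 : ℂ) * x) +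
      R * Complex.exp (Complex.I * (k : ℂ) * (n1 : ℂ) * x) with hvdef
  have huv : u =ᶠ[𝓝 (-1 : ℝ)] v :=
    Filter.eventuallyEq_of_mem (Iio_mem_nhds (by norm_num : (-1:ℝ) < 0))
      (fun x hx => huleft x (le_of_lt hx))
  have hv : HasDerivAt v
      ((-Complex.I * k * n1) * Complex.exp (-Complex.I * (k : ℂ) * (n1 : ℂ) * (-1 : ℝ)) +
        R * ((Complex.I * k * n1) * Complex.exp (Complex.I * (k : ℂ) * (n1 : ℂ) * (-1 : ℝ))))
      (-1) :=
    ((expDerivAux (-Complex.I * k * n1) (-1)).add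
      ((expDerivAux (Complex.I * k * n1) (-1)).const_mul R))
  have hderivu1 : deriv u (-1) = (-Complex.I * k * n1) *
      Complex.exp (-Complex.I * (k : ℂ) * (n1 : ℂ) * (-1 : ℝ)) +
        R * ((Complex.I * k * n1) * Complex.exp (Complex.I * (k : ℂ) * (n1 : ℂ) * (-1 : ℝ))) := by
    rw [huv.deriv_eq, hv.deriv]
  have hu1 : u (-1) = v (-1) := huleft (-1) (by norm_num)
  -- compute W at d+1
  set w : ℝ → ℂ := fun x => T * Complex.exp (-Complex.I * (k : ℂ) * (n2 : ℂ) * x) with hwdef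
  have huw : u =ᶠ[𝓝 (d + 1 : ℝ)] w :=
    Filter.eventuallyEq_of_mem (Ioi_mem_nhds (by linarith : d < d + 1))
      (fun x hx => huright x (le_of_lt hx))
  have hw : HasDerivAt w
      (T * ((-Complex.I * k * n2) * Complex.exp (-Complex.I * (k : ℂ) * (n2 : ℂ) * (d + 1 : ℝ))))
      (d + 1) :=
    (expDerivAux (-Complex.I * k * n2) (d + 1)).const_mul T
  have hderivu2 : deriv u (d + 1) = T * ((-Complex.I * k * n2) *
      Complex.exp (-Complex.I * (k : ℂ) * (n2 : ℂ) * (d + 1 : ℝ))) := by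
    rw [huw.deriv_eq, hw.deriv]
  have hu2 : u (d + 1) = w (d + 1) := huright (d + 1) (by linarith)
  -- abbreviations for the exponentials
  set e1 : ℂ := Complex.exp (-Complex.I * (k : ℂ) * (n1 : ℂ) * (-1 : ℝ)) with he1
  set e2 : ℂ := Complex.exp (Complex.I * (k : ℂ) * (n1 : ℂ) * (-1 : ℝ)) with he2
  set e3 : ℂ := Complex.exp (-Complex.I * (k : ℂ) * (n2 : ℂ) * (d + 1 : ℝ)) with he3
  set e4 : ℂ := Complex.exp (Complex.I * (k : ℂ) * (n2 : ℂ) * (d + 1 : ℝ)) with he4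
  have he12 : e1 * e2 = 1 := by
    rw [he1, he2, ← Complex.exp_add]; ring_nf; exact Complex.exp_zero
  have he34 : e3 * e4 = 1 := by
    rw [he3, he4, ← Complex.exp_add]; ring_nf; exact Complex.exp_zero
  have hc1 : star (-Complex.I * (k : ℂ) * (n1 : ℂ)) = Complex.I * (k : ℂ) * (n1 : ℂ) := by
    simp [Complex.star_def, map_mul, Complex.conj_I, Complex.conj_ofReal]
  have hc2 : star (Complex.I * (k : ℂ) * (n1 : ℂ)) = -Complex.I * (k : ℂ) * (n1 : ℂ) := by
    simp [Complex.star_def, map_mul, Complex.conj_I, Complex.conj_ofReal]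
  have hc3 : star (-Complex.I * (k : ℂ) * (n2 : ℂ)) = Complex.I * (k : ℂ) * (n2 : ℂ) := by
    simp [Complex.star_def, map_mul, Complex.conj_I, Complex.conj_ofReal]
  have hse1 : star e1 = e2 := by
    rw [he1, he2, starExpAux, hc1]
  have hse2 : star e2 = e1 := by
    rw [he1, he2, starExpAux, hc2]
  have hse3 : star e3 = e4 := by
    rw [he3, he4, starExpAux, hc3]
  -- closed forms
  have hWleft : W (-1) = 2 * Complex.I * k * n1 * (R * star R - 1) := by
    rw [hWdef]
    simp only [hu1, hderivu1, hvdef, ← he1, ← he2]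
    simp only [star_add, star_mul', star_neg, Complex.star_def, Complex.conj_ofReal,
      Complex.conj_I, hse1, hse2, map_mul, map_neg]
    linear_combination (2 * Complex.I * (k:ℂ) * (n1:ℂ) * (R * (starRingEnd ℂ) R - 1)) * he12
  have hWright : W (d + 1) = -(2 * Complex.I * k * n2 * (T * star T)) := by
    rw [hWdef]
    simp only [hu2, hderivu2, hwdef, ← he3, ← he4]
    simp only [star_mul', star_neg, Complex.star_def, Complex.conj_ofReal,
      Complex.conj_I, map_mul, map_neg]
    rw [show (starRingEnd ℂ) e3 = e4 from hse3]
    linear_combination (-(2 * Complex.I * (k:ℂ) * (n2:ℂ) * (T * (starRingEnd ℂ) T))) * he34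
  -- combine
  have hRR : R * star R = ((‖R‖ ^ 2 : ℝ) : ℂ) := by
    rw [show star R = (starRingEnd ℂ) R from rfl, Complex.mul_conj, Complex.normSq_eq_norm_sq]
  have hTT : T * star T = ((‖T‖ ^ 2 : ℝ) : ℂ) := by
    rw [show star T = (starRingEnd ℂ) T from rfl, Complex.mul_conj, Complex.normSq_eq_norm_sq]
  have key : (k : ℂ) * n1 * ((‖R‖ ^ 2 : ℝ) - 1)
      = -((k : ℂ) * n2 * ((‖T‖ ^ 2 : ℝ))) := by
    have h := hWconst
    rw [hWleft, hWright, hRR, hTT] at h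
    have h2 : (2 * Complex.I) * ((k : ℂ) * n1 * (((‖R‖ ^ 2 : ℝ) : ℂ) - 1))
        = (2 * Complex.I) * (-((k : ℂ) * n2 * ((‖T‖ ^ 2 : ℝ) : ℂ))) := by
      linear_combination h
    exact mul_left_cancel₀ (by simp [Complex.I_ne_zero] : (2 * Complex.I : ℂ) ≠ 0) h2
  have keyR : k * n1 * (‖R‖ ^ 2 - 1) = -(k * n2 * (‖T‖ ^ 2)) := by
    exact_mod_cast key
  have hk' : k ≠ 0 := ne_of_gt hk
  have hn1' : n1 ≠ 0 := ne_of_gt hn1pos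
  field_simp
  nlinarith [keyR, mul_pos hk hn1pos]
end

section
/- If v is a solution of the p-polarization equation n(x)² ( v'(x)/n(x)² )' + (k² n(x)² − β²) v(x) = 0, then the function U = v/n is a solution of the Helmholtz-type equation U''(x) + (k² N(x)² − β²) U(x) = 0, where k² N² = k² n² + n''/n − 2 (n'/n)². -/
open Set Filter
open scoped Topology

theorem p_polarization_to_helmholtz
    (k beta : ℝ) (hk : 0 < k)
    (n : ℝ → ℝ) (hn : ContDiff ℝ 2 n) (hnne : ∀ x, n x ≠ 0)
    (v : ℝ → ℂ) (hv : Differentiable ℝ v)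
    (hv' : Differentiable ℝ (fun x => deriv v x / (n x : ℂ) ^ 2))
    (hveq : ∀ x : ℝ,
      (n x : ℂ) ^ 2 * deriv (fun y => deriv v y / (n y : ℂ) ^ 2) x +
        ((k : ℂ) ^ 2 * (n x : ℂ) ^ 2 - (beta : ℂ) ^ 2) * v x = 0) :
    Differentiable ℝ (fun x => v x / (n x : ℂ)) ∧
    Differentiable ℝ (deriv (fun x => v x / (n x : ℂ))) ∧
    ∀ x : ℝ,
      deriv (deriv (fun y => v y / (n y : ℂ))) x +
        (((k : ℂ) ^ 2 * (n x : ℂ) ^ 2 +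
            ((deriv (deriv n) x : ℝ) : ℂ) / (n x : ℂ) -
            2 * (((deriv n x : ℝ) : ℂ) / (n x : ℂ)) ^ 2) - (beta : ℂ) ^ 2) *
          (v x / (n x : ℂ)) = 0 := by
  -- basic differentiability facts about n
  have hnd : Differentiable ℝ n := hn.differentiable (by norm_num)
  have hnd1 : Differentiable ℝ (deriv n) := by
    have := (contDiff_succ_iff_deriv.mp (by exact_mod_cast hn : ContDiff ℝ (1+1) n)).2.2
    exact this.differentiable (by norm_num)
  set m : ℝ → ℂ := fun x => (n x : ℂ) with hm_def
  have hmne : ∀ x, m x ≠ 0 := fun x => by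
    simpa [hm_def] using (Complex.ofReal_ne_zero.mpr (hnne x))
  have hm : ∀ x, HasDerivAt m (((deriv n x : ℝ) : ℂ)) x := fun x =>
    ((hnd x).hasDerivAt).ofReal_comp
  have hmd : Differentiable ℝ m := fun x => (hm x).differentiableAt
  have hm1 : ∀ x, HasDerivAt (fun x => ((deriv n x : ℝ) : ℂ)) (((deriv (deriv n) x : ℝ) : ℂ)) x :=
    fun x => ((hnd1 x).hasDerivAt).ofReal_comp
  have hm1d : Differentiable ℝ (fun x => ((deriv n x : ℝ) : ℂ)) := fun x =>
    (hm1 x).differentiableAt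
  -- w := v'/n^2
  set w : ℝ → ℂ := fun x => deriv v x / (m x) ^ 2 with hw_def
  have hwd : Differentiable ℝ w := hv'
  have hderiv_v_eq : deriv v = fun x => w x * m x ^ 2 := by
    funext x
    simp only [hw_def]
    rw [div_mul_cancel₀ _ (pow_ne_zero 2 (hmne x))]
  have hvd1 : Differentiable ℝ (deriv v) := by
    rw [hderiv_v_eq]
    exact hwd.mul (hmd.pow 2)
  -- second derivative of v
  have hv2 : ∀ x, HasDerivAt (deriv v)
      (deriv w x * m x ^ 2 + w x * (2 * m x * ((deriv n x : ℝ) : ℂ))) x := by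
    intro x
    rw [hderiv_v_eq]
    have h1 : HasDerivAt w (deriv w x) x := (hwd x).hasDerivAt
    have h2 : HasDerivAt (fun x => m x ^ 2) (2 * m x * ((deriv n x : ℝ) : ℂ)) x := by
      have h2' := (hm x).mul (hm x)
      have h3 : (fun x => m x * m x) = fun x => m x ^ 2 := by funext y; ring
      rw [show (m * m) = fun x => m x * m x from rfl, h3] at h2'
      exact h2'.congr_deriv (by ring)
    exact h1.mul h2
  -- first derivative of U = v/m
  have hU1 : ∀ x, HasDerivAt (fun y => v y / m y)
      ((deriv v x * m x - v x * ((deriv n x : ℝ) : ℂ)) / m x ^ 2) x := fun x =>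
    ((hv x).hasDerivAt).div (hm x) (hmne x)
  have hUd : Differentiable ℝ (fun y => v y / m y) := hv.div hmd hmne
  have hderivU_eq : deriv (fun y => v y / m y) =
      fun x => (deriv v x * m x - v x * ((deriv n x : ℝ) : ℂ)) / m x ^ 2 := by
    funext x; exact (hU1 x).deriv
  have hnum : ∀ x, HasDerivAt (fun x => deriv v x * m x - v x * ((deriv n x : ℝ) : ℂ))
      ((deriv w x * m x ^ 2 + w x * (2 * m x * ((deriv n x : ℝ) : ℂ))) * m x
        + deriv v x * ((deriv n x : ℝ) : ℂ)
        - (deriv v x * ((deriv n x : ℝ) : ℂ) + v x * ((deriv (deriv n) x : ℝ) : ℂ))) x := by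
    intro x
    exact ((hv2 x).mul (hm x)).sub (((hv x).hasDerivAt).mul (hm1 x))
  have hden : ∀ x, HasDerivAt (fun x => m x ^ 2) (2 * m x * ((deriv n x : ℝ) : ℂ)) x := by
    intro x
    have h2' := (hm x).mul (hm x)
    have h3 : (fun x => m x * m x) = fun x => m x ^ 2 := by funext y; ring
    rw [show (m * m) = fun x => m x * m x from rfl, h3] at h2'
    exact h2'.congr_deriv (by ring)
  have hU2 : ∀ x, HasDerivAt (deriv (fun y => v y / m y))
      ((((deriv w x * m x ^ 2 + w x * (2 * m x * ((deriv n x : ℝ) : ℂ))) * m x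
          + deriv v x * ((deriv n x : ℝ) : ℂ)
          - (deriv v x * ((deriv n x : ℝ) : ℂ) + v x * ((deriv (deriv n) x : ℝ) : ℂ))) * m x ^ 2
        - (deriv v x * m x - v x * ((deriv n x : ℝ) : ℂ)) * (2 * m x * ((deriv n x : ℝ) : ℂ)))
        / (m x ^ 2) ^ 2) x := by
    intro x
    rw [hderivU_eq]
    exact (hnum x).div (hden x) (pow_ne_zero 2 (hmne x))
  have hUd2 : Differentiable ℝ (deriv (fun y => v y / m y)) := fun x =>
    (hU2 x).differentiableAt
  refine ⟨hUd, hUd2, ?_⟩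
  intro x
  rw [(hU2 x).deriv]
  -- use the equation to eliminate deriv w x
  have heq : deriv w x = ((beta : ℂ) ^ 2 - (k : ℂ) ^ 2 * m x ^ 2) * v x / m x ^ 2 := by
    have h := hveq x
    have hne := pow_ne_zero 2 (hmne x)
    rw [eq_div_iff hne, show m x = (n x : ℂ) from rfl]
    linear_combination h
  have hwx : w x = deriv v x / m x ^ 2 := rfl
  rw [heq, hwx, show m x = (n x : ℂ) from rfl]
  field_simp [Complex.ofReal_ne_zero.mpr (hnne x)]
  ring
end
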